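/- arXiv:0708.2871 — 2 statements merged into one kernel-verified Lean document; each statement's English description precedes it below -/
import Mathlib

section
/- In any triangle with sides a, b, c, circumradius R, and inradius r, 1/(b+c−a) + 1/(c+a−b) + 1/(a+b−c) ≥ (1/(2r))·√(4 − 9r/(4R + r)). -/
lemma schur_aux (x y z : ℝ) (hx : 0 < x) (hy : 0 < y) (hz : 0 < z) :
    4*(x+y+z)*((x*y+y*z+z*x))*(x*y*z) ≤ (x*y+y*z+z*x)^3 + 9*(x*y*z)^2 := by
  nlinarith [mul_nonneg (mul_nonneg hx.le hy.le) (sq_nonneg (x*y-y*z)),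
    mul_nonneg (mul_nonneg hy.le hz.le) (sq_nonneg (y*z-z*x)),
    mul_nonneg (mul_nonneg hz.le hx.le) (sq_nonneg (z*x-x*y)),
    mul_nonneg (mul_nonneg hx.le hy.le) (sq_nonneg (x*y-z*x)),
    mul_nonneg (mul_nonneg hy.le hz.le) (sq_nonneg (y*z-x*y)),
    mul_nonneg (mul_nonneg hz.le hx.le) (sq_nonneg (z*x-y*z))]

theorem application_one (a b c : ℝ) (ha : 0 < a) (hb : 0 < b) (hc : 0 < c)
    (hA : a < b + c) (hB : b < c + a) (hC : c < a + b) (s S : ℝ) (hs : s = (a + b + c) / 2)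
    (hS : S = Real.sqrt (s * (s - a) * (s - b) * (s - c))) (R : ℝ) (hR : R = a * b * c / (4 * S)) (r : ℝ) (hr : r = S / s) :
    1 / (b + c - a) + 1 / (c + a - b) + 1 / (a + b - c)
      ≥ 1 / (2 * r) * Real.sqrt (4 - 9 * r / (4 * R + r)) := by
  obtain ⟨x, hxd⟩ : ∃ u : ℝ, u = s - a := ⟨_, rfl⟩
  obtain ⟨y, hyd⟩ : ∃ u : ℝ, u = s - b := ⟨_, rfl⟩
  obtain ⟨z, hzd⟩ : ∃ u : ℝ, u = s - c := ⟨_, rfl⟩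
  rw [← hxd, ← hyd, ← hzd] at hS
  have hx : 0 < x := by rw [hxd, hs]; linarith
  have hy : 0 < y := by rw [hyd, hs]; linarith
  have hz : 0 < z := by rw [hzd, hs]; linarith
  have hs0 : 0 < s := by rw [hs]; linarith
  have hsx : s = x + y + z := by rw [hxd, hyd, hzd]; linarith [hs]
  have ha' : a = y + z := by rw [hyd, hzd]; linarith [hs]
  have hb' : b = z + x := by rw [hxd, hzd]; linarith [hs]
  have hc' : c = x + y := by rw [hxd, hyd]; linarith [hs]
  obtain ⟨q, hqd⟩ : ∃ u : ℝ, u = x*y + y*z + z*x := ⟨_, rfl⟩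
  obtain ⟨t, htd⟩ : ∃ u : ℝ, u = x*y*z := ⟨_, rfl⟩
  have hq0 : 0 < q := by rw [hqd]; positivity
  have ht0 : 0 < t := by rw [htd]; positivity
  have hprod : 0 < s * x * y * z := by positivity
  have hS0 : 0 < S := by rw [hS]; exact Real.sqrt_pos.mpr hprod
  have hS2 : S^2 = s * x * y * z := by rw [hS]; exact Real.sq_sqrt hprod.le
  have hr0 : 0 < r := by rw [hr]; exact div_pos hS0 hs0
  have hr2 : r^2 = t / s := by
    rw [hr, div_pow, htd]
    rw [hS2]; field_simp
  have hrS : r * S = t := by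
    rw [hr, htd]; field_simp
    nlinarith [hS2]
  have hRS : 4*R*S = a*b*c := by rw [hR]; field_simp
  have h1 : (4*R + r) * S = s * q := by
    have e : (4*R + r) * S = 4*R*S + r*S := by ring
    rw [e, hRS, hrS, ha', hb', hc', hsx, hqd, htd]; ring
  have h4Rr : 0 < 4*R + r := by
    have e : 4*R + r = s*q/S := eq_div_of_mul_eq hS0.ne' h1
    rw [e]; positivity
  have h9 : 9 * r / (4*R + r) = 9 * t / (s * q) := by
    rw [← h1, ← hrS]
    rw [div_eq_div_iff (by positivity) (by positivity)]
    ring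
  have key0 : 4*s*q*t ≤ q^3 + 9*t^2 := by
    rw [hsx, hqd, htd]; exact schur_aux x y z hx hy hz
  have key : 4 - 9 * r / (4*R + r) ≤ (r*q/t)^2 := by
    rw [h9]
    have h2 : (r*q/t)^2 = q^2 / (s*t) := by
      rw [div_pow, mul_pow, hr2]; field_simp
    rw [h2, ← sub_nonneg]
    have e4 : q^2/(s*t) - (4 - 9*t/(s*q)) = (q^3 + 9*t^2 - 4*s*q*t)/(s*q*t) := by
      field_simp; ring
    rw [e4]
    apply div_nonneg (by linarith [key0]) (by positivity)
  have hsqrt : Real.sqrt (4 - 9 * r / (4*R + r)) ≤ r*q/t := by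
    have := Real.sqrt_le_sqrt key
    rwa [Real.sqrt_sq (by positivity)] at this
  have hba : b + c - a = 2*x := by rw [hxd]; linarith [hs]
  have hcb : c + a - b = 2*y := by rw [hyd]; linarith [hs]
  have hac : a + b - c = 2*z := by rw [hzd]; linarith [hs]
  rw [hba, hcb, hac, ge_iff_le]
  calc 1/(2*r) * Real.sqrt (4 - 9*r/(4*R + r))
      ≤ 1/(2*r) * (r*q/t) := by
        apply mul_le_mul_of_nonneg_left hsqrt (by positivity)
    _ = q/(2*t) := by field_simp
    _ = 1/(2*x) + 1/(2*y) + 1/(2*z) := by rw [hqd, htd]; field_simp; ring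
end

section
/- In any triangle with sides a, b, c, exradii r_a, r_b, r_c, circumradius R, and inradius r, a/r_a + b/r_b + c/r_c ≥ 2·√(3 + 4(R − 2r)/(4R + r)). -/
theorem schur_aux_s18 (u v w : ℝ) (hu : 0 ≤ u) (hv : 0 ≤ v) (hw : 0 ≤ w) :
    u^2*v + u^2*w + v^2*u + v^2*w + w^2*u + w^2*v ≤ u^3 + v^3 + w^3 + 3*(u*v*w) := by
  rcases le_total u v with h1|h1 <;> rcases le_total v w with h2|h2 <;>
    rcases le_total u w with h3|h3 <;>
  nlinarith [mul_nonneg hu (mul_self_nonneg (v-w)), mul_nonneg hv (mul_self_nonneg (u-w)),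
    mul_nonneg hw (mul_self_nonneg (u-v)),
    mul_nonneg (mul_nonneg hu hv) hw]

theorem key_ineq (x y z : ℝ) (hx : 0 < x) (hy : 0 < y) (hz : 0 < z) :
    4*(x+y+z)*(x*y+y*z+z*x)*(x*y*z) ≤ (x*y+y*z+z*x)^3 + 9*(x*y*z)^2 := by
  have := schur_aux_s18 (x*y) (y*z) (z*x) (by positivity) (by positivity) (by positivity)
  nlinarith [this]

theorem application_five (a b c : ℝ) (ha : 0 < a) (hb : 0 < b) (hc : 0 < c)
    (hA : a < b + c) (hB : b < c + a) (hC : c < a + b) (s S : ℝ) (hs : s = (a + b + c) / 2)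
    (hS : S = Real.sqrt (s * (s - a) * (s - b) * (s - c))) (R : ℝ) (hR : R = a * b * c / (4 * S)) (r : ℝ) (hr : r = S / s)
    (ra rb rc : ℝ) (hra : ra = S / (s - a)) (hrb : rb = S / (s - b))
    (hrc : rc = S / (s - c)) :
    a / ra + b / rb + c / rc
      ≥ 2 * Real.sqrt (3 + 4 * (R - 2 * r) / (4 * R + r)) := by
  have hx : 0 < s - a := by rw [hs]; linarith
  have hy : 0 < s - b := by rw [hs]; linarith
  have hz : 0 < s - c := by rw [hs]; linarith
  have hsp : 0 < s := by rw [hs]; linarith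
  set q : ℝ := (s-a)*(s-b) + (s-b)*(s-c) + (s-c)*(s-a) with hq
  set t : ℝ := (s-a)*(s-b)*(s-c) with ht
  have hqp : 0 < q := by positivity
  have htp : 0 < t := by positivity
  have hP : 0 < s * (s-a) * (s-b) * (s-c) := by positivity
  have hSpos : 0 < S := by rw [hS]; exact Real.sqrt_pos.mpr hP
  have hS2 : S^2 = s * t := by
    rw [hS, Real.sq_sqrt hP.le, ht]; ring
  -- sum of sides identity: a = (s-b)+(s-c) etc.
  have hsum : s - a + (s - b) + (s - c) = s := by rw [hs]; ring
  -- LHS equals 2*q/S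
  have hL : a / ra + b / rb + c / rc = 2 * q / S := by
    rw [hra, hrb, hrc, div_div_eq_mul_div, div_div_eq_mul_div, div_div_eq_mul_div, hq,
      ← add_div, ← add_div, hs]
    ring_nf
  -- R, r positivity
  have hRpos : 0 < R := by rw [hR]; positivity
  have hrpos : 0 < r := by rw [hr]; positivity
  have hDpos : 0 < 4 * R + r := by linarith
  -- abc + t = s*q
  have habc : a * b * c + t = s * q := by rw [ht, hq, hs]; ring
  -- E = (4*s*q - 9*t)/(s*q)
  have hE : 3 + 4 * (R - 2 * r) / (4 * R + r) = (4*(s*q) - 9*t) / (s*q) := by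
    have h1 : 4 * R + r = S * q / t := by
      rw [hR, hr]
      field_simp
      linear_combination (t - s*q)*hS2 + s*t*habc
    rw [h1, hR, hr]
    field_simp
    linear_combination (t - s*q)*hS2 + s*t*habc
  rw [hL, hE, ge_iff_le]
  have hqS : Real.sqrt ((4*(s*q) - 9*t) / (s*q)) ≤ q / S := by
    have h2 : (4*(s*q) - 9*t) / (s*q) ≤ (q / S)^2 := by
      rw [div_pow, hS2, div_le_div_iff₀ (by positivity) (by positivity)]
      have := key_ineq (s-a) (s-b) (s-c) hx hy hz
      rw [hsum] at this
      rw [← hq, ← ht] at this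
      linear_combination mul_le_mul_of_nonneg_left this hsp.le
    calc Real.sqrt ((4*(s*q) - 9*t) / (s*q)) ≤ Real.sqrt ((q/S)^2) := Real.sqrt_le_sqrt h2
      _ = q / S := Real.sqrt_sq (by positivity)
  calc 2 * Real.sqrt ((4*(s*q) - 9*t) / (s*q)) ≤ 2 * (q / S) := by linarith
    _ = 2 * q / S := by ring
end
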